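/- arXiv:1708.00721 — 2 statements merged into one kernel-verified Lean document; each statement's English description precedes it below -/
import Mathlib

section
/- In the two-handle construction, the map ω ↦ B_ω is a bijection from Ω onto ℬ, each B_ω is a block for H acting on 𝒰, and B_{ω^{π(g)}} = B_ω^{φ(g)} for all ω ∈ Ω and g ∈ Δ(p,q,r); hence the induced action of H on ℬ is equivalent to the action of π(Δ(p,q,r)) on Ω, and (when |Ω| > 1) H acts imprimitively on 𝒰 with block system ℬ. -/
open Equiv Pointwise

def triRels (p q r : ℕ) : Set (FreeGroup (Fin 2)) :=
  {FreeGroup.of 0 ^ p, FreeGroup.of 1 ^ q, (FreeGroup.of 0 * FreeGroup.of 1) ^ r}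

/-- The triangle group `Δ(p,q,r) = ⟨x, y ∣ x^p = y^q = (xy)^r = 1⟩. -/
abbrev Tri (p q r : ℕ) := PresentedGroup (triRels p q r)

/-- The generator `x` of the triangle group. -/
def gx (p q r : ℕ) : Tri p q r := PresentedGroup.of 0

/-- The generator `y` of the triangle group. -/
def gy (p q r : ℕ) : Tri p q r := PresentedGroup.of 1

/-- A permutation of `Ω` acting simultaneously on every copy `{i} × Ω`;
this models `π_1(g)π_2(g)⋯π_m(g)` on the disjoint union `𝒰` of the copies. -/
def prodCongrHom (ι Ω : Type) : Equiv.Perm Ω →* Equiv.Perm (ι × Ω) where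
  toFun σ := Equiv.prodCongr (Equiv.refl ι) σ
  map_one' := Equiv.ext fun z => by cases z; rfl
  map_mul' σ τ := Equiv.ext fun z => by cases z; rfl

/-- The identification of `Fin m` with the fibre `{(j, e) : j ∈ Fin m}`,
sending `j` to the copy `e_j = (j, e)` of the point `e`. -/
def fib (m : ℕ) (Ω : Type) [DecidableEq Ω] (e : Ω) :
    Fin m ≃ {z : Fin m × Ω // z.2 = e} where
  toFun j := ⟨(j, e), rfl⟩
  invFun z := z.1.1
  left_inv j := rfl
  right_inv z := by
    obtain ⟨⟨j, e'⟩, hz⟩ := z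
    subst hz
    rfl

/-- `φ_x = π_1(x)⋯π_m(x) ∘ γ_1⋯γ_k ∘ δ_1⋯δ_l` on `𝒰 = Fin m × Fin deg`: the product
`γ_1⋯γ_k` acts on the copies of `a` as `α` and on the copies of `b` as `α⁻¹`, and the
product `δ_1⋯δ_l` acts on the copies of `c` as `β` and on the copies of `d` as `β⁻¹`. -/
def phiX2h (p q r deg m : ℕ) (π : Tri p q r →* Equiv.Perm (Fin deg))
    (α β : Equiv.Perm (Fin m)) (a b c d : Fin deg) : Equiv.Perm (Fin m × Fin deg) :=
  prodCongrHom (Fin m) (Fin deg) (π (gx p q r)) *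
    Equiv.Perm.extendDomain α (fib m (Fin deg) a) *
    Equiv.Perm.extendDomain α⁻¹ (fib m (Fin deg) b) *
    Equiv.Perm.extendDomain β (fib m (Fin deg) c) *
    Equiv.Perm.extendDomain β⁻¹ (fib m (Fin deg) d)

/-- `φ_y = π_1(y)⋯π_m(y)` on `𝒰 = Fin m × Fin deg`. -/
def phiY2h (p q r deg m : ℕ) (π : Tri p q r →* Equiv.Perm (Fin deg)) :
    Equiv.Perm (Fin m × Fin deg) :=
  prodCongrHom (Fin m) (Fin deg) (π (gy p q r))

/-- The block `B_ω = {ω, deg + ω, …, (m-1)deg + ω}`, i.e. the set of all copies of `ω`. -/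
def Bset (m : ℕ) {Ω : Type} (ω : Ω) : Set (Fin m × Ω) :=
  Set.range fun i : Fin m => ((i, ω) : Fin m × Ω)

lemma mem_Bset {m : ℕ} {Ω : Type} {ω : Ω} {z : Fin m × Ω} :
    z ∈ Bset m ω ↔ z.2 = ω := by
  constructor
  · rintro ⟨i, rfl⟩; rfl
  · intro h; subst h; exact ⟨z.1, rfl⟩

lemma extendDomain_fib_snd {m deg : ℕ} (σ : Equiv.Perm (Fin m)) (e : Fin deg)
    (z : Fin m × Fin deg) :
    ((σ.extendDomain (fib m (Fin deg) e)) z).2 = z.2 := by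
  by_cases h : z.2 = e
  · rw [Equiv.Perm.extendDomain_apply_subtype σ (fib m (Fin deg) e) h, h]
    rfl
  · rw [Equiv.Perm.extendDomain_apply_not_subtype σ (fib m (Fin deg) e) h]

lemma prodCongrHom_snd {ι Ω : Type} (σ : Equiv.Perm Ω) (z : ι × Ω) :
    ((prodCongrHom ι Ω σ) z).2 = σ z.2 := rfl

lemma phiX2h_snd (p q r deg m : ℕ) (π : Tri p q r →* Equiv.Perm (Fin deg))
    (α β : Equiv.Perm (Fin m)) (a b c d : Fin deg) (z : Fin m × Fin deg) :
    ((phiX2h p q r deg m π α β a b c d) z).2 = π (gx p q r) z.2 := by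
  simp only [phiX2h, Equiv.Perm.mul_apply, prodCongrHom_snd, extendDomain_fib_snd]

theorem two_handle_blocks_imprimitive
    (p q r k₀ deg m kk ll : ℕ) (hp : 0 < p) (hq : 0 < q) (hr : 0 < r)
    (hk₀ : 0 < k₀) (hm : 0 < m)
    (π : Tri p q r →* Equiv.Perm (Fin deg))
    (htrans : ∀ z z' : Fin deg, ∃ g : Tri p q r, π g z = z')
    (a b c d : Fin deg)
    (hab : a ≠ b) (hac : a ≠ c) (had : a ≠ d) (hbc : b ≠ c) (hbd : b ≠ d) (hcd : c ≠ d)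
    (hax : π (gx p q r) a = a) (hbx : π (gx p q r) b = b)
    (hcx : π (gx p q r) c = c) (hdx : π (gx p q r) d = d)
    (hhandle_ab : ((π (gx p q r * gy p q r)) ^ k₀) a = b)
    (hhandle_cd : ((π (gx p q r * gy p q r)) ^ k₀) c = d)
    (horb_ac : ∀ n : ℤ, ((π (gx p q r * gy p q r)) ^ n) a ≠ c)
    (horb_ad : ∀ n : ℤ, ((π (gx p q r * gy p q r)) ^ n) a ≠ d)
    (horb_ca : ∀ n : ℤ, ((π (gx p q r * gy p q r)) ^ n) c ≠ a)
    (horb_cb : ∀ n : ℤ, ((π (gx p q r * gy p q r)) ^ n) c ≠ b)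
    (hk₀a : k₀ < Nat.card {w : Fin deg | ∃ n : ℤ, ((π (gx p q r * gy p q r)) ^ n) a = w})
    (hk₀c : k₀ < Nat.card {w : Fin deg | ∃ n : ℤ, ((π (gx p q r * gy p q r)) ^ n) c = w})
    (α β : Equiv.Perm (Fin m))
    (hα : α.cycleType = Multiset.replicate kk p)
    (hβ : β.cycleType = Multiset.replicate ll p)
    (hαβ : ∀ j j' : Fin m, ∃ g ∈ Subgroup.closure {α, β}, g j = j')
    (φ : Tri p q r →* Equiv.Perm (Fin m × Fin deg))
    (hφx : φ (gx p q r) = phiX2h p q r deg m π α β a b c d)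
    (hφy : φ (gy p q r) = phiY2h p q r deg m π)
    :
    Function.Injective (fun ω : Fin deg => Bset m ω) ∧
    (∀ (ω : Fin deg) (g : Tri p q r), ⇑(φ g) '' Bset m ω = Bset m (π g ω)) ∧
    (∀ (ω : Fin deg) (g : Tri p q r),
      ⇑(φ g) '' Bset m ω = Bset m ω ∨ Disjoint (⇑(φ g) '' Bset m ω) (Bset m ω)) ∧
    (∀ u : Fin m × Fin deg, ∃! ω : Fin deg, u ∈ Bset m ω) ∧
    (1 < deg → ∀ ω : Fin deg, Bset m ω ≠ ∅ ∧ Bset m ω ≠ Set.univ) := by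
  have key : ∀ (g : Tri p q r) (z : Fin m × Fin deg), (φ g z).2 = π g z.2 := by
    let S : Subgroup (Tri p q r) :=
      { carrier := {g | ∀ z, (φ g z).2 = π g z.2}
        one_mem' := by intro z; simp
        mul_mem' := by
          intro g h hg hh z
          simp only [map_mul, Equiv.Perm.mul_apply]
          rw [hg, hh]
        inv_mem' := by
          intro g hg z
          apply (π g).injective
          have := hg ((φ g)⁻¹ z)
          simp only [map_inv] at this ⊢
          rw [← this, Equiv.Perm.coe_inv, Equiv.apply_symm_apply, Equiv.Perm.coe_inv, Equiv.apply_symm_apply] }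
    have hxS : gx p q r ∈ S := by
      intro z
      rw [hφx]
      exact phiX2h_snd p q r deg m π α β a b c d z
    have hyS : gy p q r ∈ S := by
      intro z
      rw [hφy]
      rfl
    have hS : S = ⊤ := by
      rw [eq_top_iff, ← PresentedGroup.closure_range_of (triRels p q r),
        Subgroup.closure_le]
      rintro _ ⟨i, rfl⟩
      fin_cases i
      · exact hxS
      · exact hyS
    intro g z
    exact (hS ▸ Subgroup.mem_top g : g ∈ S) z
  have key2 : ∀ (ω : Fin deg) (g : Tri p q r), ⇑(φ g) '' Bset m ω = Bset m (π g ω) := by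
    intro ω g
    ext z
    simp only [Set.mem_image, mem_Bset]
    constructor
    · rintro ⟨w, hw, rfl⟩
      rw [key g w, hw]
    · intro hz
      refine ⟨(φ g)⁻¹ z, ?_, Equiv.apply_symm_apply _ _⟩
      have := key g⁻¹ z
      simp only [map_inv] at this
      rw [this, hz, Equiv.Perm.coe_inv, Equiv.symm_apply_apply]
  refine ⟨?_, key2, ?_, ?_, ?_⟩
  · intro ω ω' h
    simp only at h
    have : ((⟨0, hm⟩ : Fin m), ω) ∈ Bset m ω' := h ▸ ⟨⟨0, hm⟩, rfl⟩
    exact mem_Bset.mp this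
  · intro ω g
    by_cases h : π g ω = ω
    · left; rw [key2, h]
    · right
      rw [key2, Set.disjoint_left]
      rintro z hz hz'
      exact h ((mem_Bset.mp hz).symm.trans (mem_Bset.mp hz'))
  · intro u
    exact ⟨u.2, mem_Bset.mpr rfl, fun ω' h => (mem_Bset.mp h).symm⟩
  · intro hdeg ω
    constructor
    · intro h
      have : ((⟨0, hm⟩ : Fin m), ω) ∈ Bset m ω := ⟨⟨0, hm⟩, rfl⟩
      rw [h] at this
      exact this
    · obtain ⟨ω', hω'⟩ := Fintype.exists_ne_of_one_lt_card (by simpa using hdeg) ω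
      intro h
      have : ((⟨0, hm⟩ : Fin m), ω') ∈ Bset m ω := by rw [h]; trivial
      exact hω' (mem_Bset.mp this)
end

section
/- In the two-handle construction, let J ≤ H be the setwise stabiliser of the block B_a = {a, deg+a, …, (m−1)deg+a} and let Q ≤ Sym(B_a) be the image of the restriction homomorphism J → Sym(B_a). Identifying B_a with {1,…,m} via a+(ℓ−1)deg ↦ ℓ, we have Q = ⟨α, β⟩. -/
open Equiv Pointwise

theorem two_handle_block_stabiliser_action
    (p q r k₀ deg m kk ll : ℕ) (hp : 0 < p) (hq : 0 < q) (hr : 0 < r)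
    (hk₀ : 0 < k₀) (hm : 0 < m)
    (π : Tri p q r →* Equiv.Perm (Fin deg))
    (htrans : ∀ z z' : Fin deg, ∃ g : Tri p q r, π g z = z')
    (a b c d : Fin deg)
    (hab : a ≠ b) (hac : a ≠ c) (had : a ≠ d) (hbc : b ≠ c) (hbd : b ≠ d) (hcd : c ≠ d)
    (hax : π (gx p q r) a = a) (hbx : π (gx p q r) b = b)
    (hcx : π (gx p q r) c = c) (hdx : π (gx p q r) d = d)
    (hhandle_ab : ((π (gx p q r * gy p q r)) ^ k₀) a = b)
    (hhandle_cd : ((π (gx p q r * gy p q r)) ^ k₀) c = d)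
    (horb_ac : ∀ n : ℤ, ((π (gx p q r * gy p q r)) ^ n) a ≠ c)
    (horb_ad : ∀ n : ℤ, ((π (gx p q r * gy p q r)) ^ n) a ≠ d)
    (horb_ca : ∀ n : ℤ, ((π (gx p q r * gy p q r)) ^ n) c ≠ a)
    (horb_cb : ∀ n : ℤ, ((π (gx p q r * gy p q r)) ^ n) c ≠ b)
    (hk₀a : k₀ < Nat.card {w : Fin deg | ∃ n : ℤ, ((π (gx p q r * gy p q r)) ^ n) a = w})
    (hk₀c : k₀ < Nat.card {w : Fin deg | ∃ n : ℤ, ((π (gx p q r * gy p q r)) ^ n) c = w})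
    (α β : Equiv.Perm (Fin m))
    (hα : α.cycleType = Multiset.replicate kk p)
    (hβ : β.cycleType = Multiset.replicate ll p)
    (hαβ : ∀ j j' : Fin m, ∃ g ∈ Subgroup.closure {α, β}, g j = j')
    (φ : Tri p q r →* Equiv.Perm (Fin m × Fin deg))
    (hφx : φ (gx p q r) = phiX2h p q r deg m π α β a b c d)
    (hφy : φ (gy p q r) = phiY2h p q r deg m π)
    :
    {σ : Equiv.Perm (Fin m) | ∃ g : Tri p q r, ∀ j : Fin m, φ g (j, a) = (σ j, a)} =
      ↑(Subgroup.closure {α, β}) := by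
  set x := gx p q r with hxdef
  set y := gy p q r with hydef
  have hαmem : α ∈ Subgroup.closure ({α, β} : Set (Equiv.Perm (Fin m))) :=
    Subgroup.subset_closure (Set.mem_insert _ _)
  have hβmem : β ∈ Subgroup.closure ({α, β} : Set (Equiv.Perm (Fin m))) :=
    Subgroup.subset_closure (Set.mem_insert_of_mem _ rfl)
  -- fixing lemmas for extendDomain off the fibre
  have hEfix : ∀ (γ : Equiv.Perm (Fin m)) (e : Fin deg) (z : Fin m × Fin deg), z.2 ≠ e →
      γ.extendDomain (fib m (Fin deg) e) z = z := by
    intro γ e z h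
    exact Equiv.Perm.extendDomain_apply_not_subtype _ _ h
  have hEapp : ∀ (γ : Equiv.Perm (Fin m)) (e : Fin deg) (j : Fin m),
      γ.extendDomain (fib m (Fin deg) e) (j, e) = (γ j, e) := by
    intro γ e j
    exact Equiv.Perm.extendDomain_apply_image γ (fib m (Fin deg) e) j
  have hP : ∀ (σ : Equiv.Perm (Fin deg)) (z : Fin m × Fin deg),
      prodCongrHom (Fin m) (Fin deg) σ z = (z.1, σ z.2) := fun σ z => rfl
  -- pointwise description of φ x
  have hXa : ∀ j : Fin m, φ x (j, a) = (α j, a) := by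
    intro j
    rw [hφx]
    simp only [phiX2h, Equiv.Perm.mul_apply]
    rw [hEfix _ d _ had, hEfix _ c _ hac, hEfix _ b _ hab, hEapp α a j, hP, hax]
  have hXb : ∀ j : Fin m, φ x (j, b) = (α⁻¹ j, b) := by
    intro j
    rw [hφx]
    simp only [phiX2h, Equiv.Perm.mul_apply]
    rw [hEfix _ d _ hbd, hEfix _ c _ hbc, hEapp α⁻¹ b j, hEfix _ a _ hab.symm, hP, hbx]
  have hXc : ∀ j : Fin m, φ x (j, c) = (β j, c) := by
    intro j
    rw [hφx]
    simp only [phiX2h, Equiv.Perm.mul_apply]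
    rw [hEfix _ d _ hcd, hEapp β c j, hEfix _ b _ hbc.symm, hEfix _ a _ hac.symm, hP, hcx]
  have hXd : ∀ j : Fin m, φ x (j, d) = (β⁻¹ j, d) := by
    intro j
    rw [hφx]
    simp only [phiX2h, Equiv.Perm.mul_apply]
    rw [hEapp β⁻¹ d j, hEfix _ c _ hcd.symm, hEfix _ b _ hbd.symm, hEfix _ a _ had.symm, hP, hdx]
  have hXo : ∀ (j : Fin m) (ω : Fin deg), ω ≠ a → ω ≠ b → ω ≠ c → ω ≠ d →
      φ x (j, ω) = (j, π x ω) := by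
    intro j ω h1 h2 h3 h4
    rw [hφx]
    simp only [phiX2h, Equiv.Perm.mul_apply]
    rw [hEfix _ d _ h4, hEfix _ c _ h3, hEfix _ b _ h2, hEfix _ a _ h1, hP]
  have hY : ∀ (j : Fin m) (ω : Fin deg), φ y (j, ω) = (j, π y ω) := by
    intro j ω
    rw [hφy]
    simp only [phiY2h]
    rw [hP]
  -- every group element lies in the closure of the generators
  have htop : ∀ g : Tri p q r, g ∈ Subgroup.closure ({x, y} : Set (Tri p q r)) := by
    intro g
    have h1 : Set.range (PresentedGroup.of : Fin 2 → Tri p q r) = {x, y} := by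
      ext z
      constructor
      · rintro ⟨i, rfl⟩
        fin_cases i
        · exact Set.mem_insert _ _
        · exact Set.mem_insert_of_mem _ rfl
      · rintro (rfl | rfl)
        · exact ⟨0, rfl⟩
        · exact ⟨1, rfl⟩
    have h2 := PresentedGroup.closure_range_of (triRels p q r)
    rw [h1] at h2
    rw [h2]
    trivial
  -- Lemma A: voltages lie in the closure of {α, β}
  have lemA : ∀ g : Tri p q r, ∀ ω : Fin deg,
      ∃ u ∈ Subgroup.closure ({α, β} : Set (Equiv.Perm (Fin m))),
        ∀ j : Fin m, φ g (j, ω) = (u j, π g ω) := by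
    intro g
    refine Subgroup.closure_induction ?_ ?_ ?_ ?_ (htop g)
    · intro g hg
      rcases hg with rfl | rfl
      · intro ω
        by_cases h1 : ω = a
        · subst h1; exact ⟨α, hαmem, fun j => by rw [hXa j, hax]⟩
        · by_cases h2 : ω = b
          · subst h2; exact ⟨α⁻¹, inv_mem hαmem, fun j => by rw [hXb j, hbx]⟩
          · by_cases h3 : ω = c
            · subst h3; exact ⟨β, hβmem, fun j => by rw [hXc j, hcx]⟩
            · by_cases h4 : ω = d
              · subst h4; exact ⟨β⁻¹, inv_mem hβmem, fun j => by rw [hXd j, hdx]⟩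
              · exact ⟨1, one_mem _, fun j => by rw [hXo j ω h1 h2 h3 h4]; rfl⟩
      · intro ω
        exact ⟨1, one_mem _, fun j => by rw [hY j ω]; rfl⟩
    · intro ω
      exact ⟨1, one_mem _, fun j => by simp⟩
    · intro g h _ _ ihg ihh ω
      obtain ⟨w, hw, hhw⟩ := ihh ω
      obtain ⟨u, hu, hgu⟩ := ihg (π h ω)
      refine ⟨u * w, mul_mem hu hw, fun j => ?_⟩
      rw [map_mul, Equiv.Perm.mul_apply, hhw j, hgu (w j), map_mul, Equiv.Perm.mul_apply]
      rfl
    · intro g _ ihg ω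
      obtain ⟨u, hu, hgu⟩ := ihg (π g⁻¹ ω)
      refine ⟨u⁻¹, inv_mem hu, fun j => ?_⟩
      have key : φ g (u⁻¹ j, π g⁻¹ ω) = (j, ω) := by
        rw [hgu (u⁻¹ j)]
        rw [map_inv]
        simp
      calc φ g⁻¹ (j, ω) = φ g⁻¹ (φ g (u⁻¹ j, π g⁻¹ ω)) := by rw [key]
        _ = (u⁻¹ j, π g⁻¹ ω) := by rw [map_inv]; exact Equiv.symm_apply_apply _ _
  -- the set of points reachable from a by a "clean" element
  have haR : ∃ g : Tri p q r, ∀ j : Fin m, φ g (j, a) = (j, a) := ⟨1, fun j => by simp⟩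
  have hfix4 : ∀ ω : Fin deg, (ω = a ∨ ω = b ∨ ω = c ∨ ω = d) → π x ω = ω := by
    rintro ω (rfl | rfl | rfl | rfl)
    · exact hax
    · exact hbx
    · exact hcx
    · exact hdx
  have hRstep : ∀ g : Tri p q r,
      (∀ ω : Fin deg, (∃ g' : Tri p q r, ∀ j : Fin m, φ g' (j, a) = (j, ω)) →
        ∃ g' : Tri p q r, ∀ j : Fin m, φ g' (j, a) = (j, π g ω)) ∧
      (∀ ω : Fin deg, (∃ g' : Tri p q r, ∀ j : Fin m, φ g' (j, a) = (j, ω)) →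
        ∃ g' : Tri p q r, ∀ j : Fin m, φ g' (j, a) = (j, π g⁻¹ ω)) := by
    intro g
    refine Subgroup.closure_induction ?_ ?_ ?_ ?_ (htop g)
    · intro g hg
      rcases hg with rfl | rfl
      · constructor
        · intro ω hω
          by_cases h0 : ω = a ∨ ω = b ∨ ω = c ∨ ω = d
          · rw [hfix4 ω h0]; exact hω
          · push_neg at h0
            obtain ⟨h1, h2, h3, h4⟩ := h0
            obtain ⟨g0, hg0⟩ := hω
            exact ⟨x * g0, fun j => by
              rw [map_mul, Equiv.Perm.mul_apply, hg0 j, hXo j ω h1 h2 h3 h4]⟩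
        · intro ω hω
          by_cases h0 : ω = a ∨ ω = b ∨ ω = c ∨ ω = d
          · have : π x⁻¹ ω = ω := by
              rw [map_inv, Equiv.Perm.inv_eq_iff_eq, hfix4 ω h0]
            rw [this]; exact hω
          · push_neg at h0
            obtain ⟨h1, h2, h3, h4⟩ := h0
            obtain ⟨g0, hg0⟩ := hω
            set ω' := π x⁻¹ ω with hω'
            have hfw : π x ω' = ω := by
              rw [hω', map_inv]; exact Equiv.apply_symm_apply _ _
            have k1 : ω' ≠ a := fun h => h1 (by rw [← hfw, h, hax])
            have k2 : ω' ≠ b := fun h => h2 (by rw [← hfw, h, hbx])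
            have k3 : ω' ≠ c := fun h => h3 (by rw [← hfw, h, hcx])
            have k4 : ω' ≠ d := fun h => h4 (by rw [← hfw, h, hdx])
            refine ⟨x⁻¹ * g0, fun j => ?_⟩
            rw [map_mul, Equiv.Perm.mul_apply, hg0 j, map_inv]
            rw [Equiv.Perm.inv_eq_iff_eq]
            rw [hXo j ω' k1 k2 k3 k4, hfw]
      · constructor
        · intro ω hω
          obtain ⟨g0, hg0⟩ := hω
          exact ⟨y * g0, fun j => by
            rw [map_mul, Equiv.Perm.mul_apply, hg0 j, hY j ω]⟩
        · intro ω hω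
          obtain ⟨g0, hg0⟩ := hω
          refine ⟨y⁻¹ * g0, fun j => ?_⟩
          rw [map_mul, Equiv.Perm.mul_apply, hg0 j, map_inv, Equiv.Perm.inv_eq_iff_eq,
            hY j (π y⁻¹ ω), map_inv, Equiv.Perm.coe_inv, Equiv.apply_symm_apply]
    · constructor
      · intro ω hω; simpa using hω
      · intro ω hω; simpa using hω
    · intro g h _ _ ihg ihh
      constructor
      · intro ω hω
        have := ihg.1 (π h ω) (ihh.1 ω hω)
        rw [map_mul, Equiv.Perm.mul_apply]
        exact this
      · intro ω hω
        have := ihh.2 (π g⁻¹ ω) (ihg.2 ω hω)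
        rw [mul_inv_rev, map_mul, Equiv.Perm.mul_apply]
        exact this
    · intro g _ ihg
      refine ⟨ihg.2, fun ω hω => ?_⟩
      rw [inv_inv]
      exact ihg.1 ω hω
  have hcR : ∃ g : Tri p q r, ∀ j : Fin m, φ g (j, a) = (j, c) := by
    obtain ⟨g0, hg0⟩ := htrans a c
    have := (hRstep g0).1 a haR
    rwa [hg0] at this
  -- conclusion
  ext σ
  simp only [Set.mem_setOf_eq, SetLike.mem_coe]
  constructor
  · rintro ⟨g, hg⟩
    obtain ⟨u, hu, hgu⟩ := lemA g a
    have hσu : σ = u := Equiv.ext fun j => by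
      have h1 := hg j
      rw [hgu j] at h1
      exact (Prod.ext_iff.mp h1.symm).1
    rwa [hσu]
  · intro hσ
    refine Subgroup.closure_induction ?_ ?_ ?_ ?_ hσ
    · intro τ hτ
      rcases hτ with rfl | rfl
      · exact ⟨x, fun j => hXa j⟩
      · obtain ⟨g0, hg0⟩ := hcR
        refine ⟨g0⁻¹ * (x * g0), fun j => ?_⟩
        rw [map_mul, map_mul, Equiv.Perm.mul_apply, Equiv.Perm.mul_apply, hg0 j, hXc j,
          map_inv, Equiv.Perm.inv_eq_iff_eq, hg0 (τ j)]
    · exact ⟨1, fun j => by simp⟩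
    · rintro σ₁ σ₂ _ _ ⟨g₁, h₁⟩ ⟨g₂, h₂⟩
      exact ⟨g₁ * g₂, fun j => by
        rw [map_mul, Equiv.Perm.mul_apply, h₂ j, h₁ (σ₂ j)]; rfl⟩
    · rintro τ _ ⟨g, h⟩
      refine ⟨g⁻¹, fun j => ?_⟩
      rw [map_inv, Equiv.Perm.inv_eq_iff_eq, h (τ⁻¹ j)]
      simp
end
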